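/- Under the standing hypotheses, for any two states φ and ψ on M one has |S(φ, M_1, …, M_m) − S(ψ, M_1, …, M_m)| ≤ 4 · ‖φ − ψ‖^{1/h}, where ‖φ − ψ‖ is the norm of the functional φ − ψ on M and S(τ, M_1, …, M_m) denotes the supremum of |I_τ|^{1/h} + |J_τ|^{1/h} over all choices of self-adjoint contractions A_{i,0}, A_{i,1} ∈ M_i (i = 1,…,m). In particular, the map τ ↦ S(τ, M_1, …, M_m) is norm continuous on the state space of M. -/

import Mathlib

open scoped ComplexOrder

/-- Product of `f` over a finite set of indices, taken in increasing index order.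
(In our applications the factors mutually commute, so the order is immaterial.) -/
noncomputable def ordProd {M : Type*} [Monoid M] {m : ℕ}
    (s : Finset (Fin m)) (f : Fin m → M) : M :=
  ((s.sort (· ≤ ·)).map f).prod

/-- The Bell-type quantity `S(τ, M₁, …, M_m)`: the supremum of
`|I_τ|^{1/h} + |J_τ|^{1/h}` over all choices of self-adjoint contractions
`A_{i,0}, A_{i,1} ∈ M_i`. -/
noncomputable def bellSup {M : Type*} [NormedRing M] [StarRing M] [CStarRing M]
    [CompleteSpace M] [NormedAlgebra ℂ M] [StarModule ℂ M]
    [PartialOrder M] [StarOrderedRing M] {m : ℕ}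
    (Msub : Fin m → StarSubalgebra ℂ M) (R : Finset (Fin m)) (h : ℕ)
    (τ : M →L[ℂ] ℂ) : ℝ :=
  sSup { s : ℝ | ∃ A0 A1 : Fin m → M,
    (∀ i, A0 i ∈ Msub i) ∧ (∀ i, A1 i ∈ Msub i) ∧
    (∀ i, IsSelfAdjoint (A0 i)) ∧ (∀ i, IsSelfAdjoint (A1 i)) ∧
    (∀ i, -1 ≤ A0 i ∧ A0 i ≤ 1) ∧ (∀ i, -1 ≤ A1 i ∧ A1 i ≤ 1) ∧
    s = ‖τ (ordProd R (fun i => A0 i + A1 i) * ordProd Rᶜ A0)‖ ^ (1 / (h : ℝ)) +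
        ‖τ (ordProd R (fun i => A0 i - A1 i) * ordProd Rᶜ A1)‖ ^ (1 / (h : ℝ)) }

section Aux
variable {M : Type*} [NormedRing M] [StarRing M] [CStarRing M] [CompleteSpace M]
    [NormedAlgebra ℂ M] [StarModule ℂ M] [PartialOrder M] [StarOrderedRing M]

lemma my_norm_le_one (a : M) (ha : IsSelfAdjoint a) (h1 : -1 ≤ a) (h2 : a ≤ 1) : ‖a‖ ≤ 1 := by
  letI : CStarAlgebra M := { ‹NormedRing M›, ‹StarRing M›, ‹CStarRing M›, ‹CompleteSpace M›,
    ‹NormedAlgebra ℂ M›, ‹StarModule ℂ M› with }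
  have hs1 : ∀ x ∈ spectrum ℝ a, x ≤ 1 := by
    rw [← le_algebraMap_iff_spectrum_le (R := ℝ) (a := a) ha]
    simpa using h2
  have hs2 : ∀ x ∈ spectrum ℝ a, (-1 : ℝ) ≤ x := by
    rw [← algebraMap_le_iff_le_spectrum (R := ℝ) (a := a) ha]
    simpa using h1
  have hsq : a ^ 2 ≤ 1 := by
    rw [← cfc_pow_id (R := ℝ) a 2 ha]
    rw [cfc_le_one_iff _ a (by fun_prop) ha]
    intro x hx
    nlinarith [hs1 x hx, hs2 x hx]
  have hpos : (0 : M) ≤ a ^ 2 := by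
    simpa [sq, ha.star_eq] using star_mul_self_nonneg a
  have hn : ‖a ^ 2‖ ≤ 1 := (CStarAlgebra.norm_le_one_iff_of_nonneg _ hpos).mpr hsq
  have h3 : ‖a‖ * ‖a‖ ≤ 1 := by
    rw [← CStarRing.norm_star_mul_self (x := a), ha.star_eq, ← sq]; exact hn
  nlinarith [norm_nonneg a]

omit [CompleteSpace M] [NormedAlgebra ℂ M] [StarModule ℂ M] [PartialOrder M]
  [StarOrderedRing M] in
lemma my_norm_one_le : ‖(1 : M)‖ ≤ 1 := by
  have := CStarRing.norm_star_mul_self (x := (1 : M))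
  simp only [star_one, one_mul] at this
  nlinarith [norm_nonneg (1 : M)]

omit [CompleteSpace M] [NormedAlgebra ℂ M] [StarModule ℂ M] [PartialOrder M]
  [StarOrderedRing M] in
lemma my_list_prod_norm_le (l : List M) (c : ℝ) (hc : 0 ≤ c) (h : ∀ x ∈ l, ‖x‖ ≤ c) :
    ‖l.prod‖ ≤ c ^ l.length := by
  induction l with
  | nil => simpa using my_norm_one_le
  | cons a t ih =>
    simp only [List.prod_cons, List.length_cons, pow_succ]
    calc ‖a * t.prod‖ ≤ ‖a‖ * ‖t.prod‖ := norm_mul_le _ _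
      _ ≤ c * c ^ t.length := by
          exact mul_le_mul (h a (by simp)) (ih fun x hx => h x (by simp [hx]))
            (norm_nonneg _) hc
      _ = c ^ t.length * c := mul_comm _ _

omit [CompleteSpace M] [NormedAlgebra ℂ M] [StarModule ℂ M] [PartialOrder M]
  [StarOrderedRing M] in
lemma my_ordProd_norm_le {m : ℕ} (s : Finset (Fin m)) (f : Fin m → M) (c : ℝ) (hc : 0 ≤ c)
    (h : ∀ i ∈ s, ‖f i‖ ≤ c) : ‖ordProd s f‖ ≤ c ^ s.card := by
  have hlen : ((s.sort (· ≤ ·)).map f).length = s.card := by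
    simp [Finset.length_sort]
  rw [ordProd, ← hlen]
  refine my_list_prod_norm_le _ c hc ?_
  intro x hx
  obtain ⟨i, hi, rfl⟩ := List.mem_map.mp hx
  exact h i ((Finset.mem_sort _).mp hi)

omit [StarRing M] [CStarRing M] [CompleteSpace M] [NormedAlgebra ℂ M] [StarModule ℂ M]
  [PartialOrder M] [StarOrderedRing M] in
lemma my_ordProd_zero {m : ℕ} (s : Finset (Fin m)) (hs : s.Nonempty) :
    ordProd s (fun _ => (0 : M)) = 0 := by
  rw [ordProd]
  have hne : s.sort (· ≤ ·) ≠ [] := by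
    intro e
    have hlen := Finset.length_sort (α := Fin m) (· ≤ ·) (s := s)
    rw [e] at hlen
    exact hs.ne_empty (Finset.card_eq_zero.mp (by simpa using hlen.symm))
  obtain ⟨a, t, ht⟩ := List.exists_cons_of_ne_nil hne
  rw [ht]
  simp

end Aux

lemma my_rpow_cancel (c : ℝ) (hc : 0 ≤ c) (h : ℕ) (hh : h ≠ 0) :
    ((c : ℝ) ^ h) ^ (1 / (h : ℝ)) = c := by
  rw [← Real.rpow_natCast c h, ← Real.rpow_mul hc, mul_one_div,
    div_self (Nat.cast_ne_zero.mpr hh), Real.rpow_one]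

lemma my_rpow_add_le (x y : ℝ) (hx : 0 ≤ x) (hy : 0 ≤ y) {p : ℝ} (hp : 0 ≤ p) (hp1 : p ≤ 1) :
    (x + y) ^ p ≤ x ^ p + y ^ p := by
  have := NNReal.rpow_add_le_add_rpow x.toNNReal y.toNNReal hp hp1
  have h2 := NNReal.coe_le_coe.2 this
  simpa [NNReal.coe_rpow, Real.coe_toNNReal x hx, Real.coe_toNNReal y hy] using h2

section Main
variable {M : Type*} [NormedRing M] [StarRing M] [CStarRing M] [CompleteSpace M]
    [NormedAlgebra ℂ M] [StarModule ℂ M] [PartialOrder M] [StarOrderedRing M]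
    {m : ℕ}

/-- The set whose supremum is `bellSup`. -/
def bellSet (Msub : Fin m → StarSubalgebra ℂ M) (R : Finset (Fin m)) (h : ℕ)
    (τ : M →L[ℂ] ℂ) : Set ℝ :=
  { s : ℝ | ∃ A0 A1 : Fin m → M,
    (∀ i, A0 i ∈ Msub i) ∧ (∀ i, A1 i ∈ Msub i) ∧
    (∀ i, IsSelfAdjoint (A0 i)) ∧ (∀ i, IsSelfAdjoint (A1 i)) ∧
    (∀ i, -1 ≤ A0 i ∧ A0 i ≤ 1) ∧ (∀ i, -1 ≤ A1 i ∧ A1 i ≤ 1) ∧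
    s = ‖τ (ordProd R (fun i => A0 i + A1 i) * ordProd Rᶜ A0)‖ ^ (1 / (h : ℝ)) +
        ‖τ (ordProd R (fun i => A0 i - A1 i) * ordProd Rᶜ A1)‖ ^ (1 / (h : ℝ)) }

lemma bellSup_eq (Msub : Fin m → StarSubalgebra ℂ M) (R : Finset (Fin m)) (h : ℕ)
    (τ : M →L[ℂ] ℂ) : bellSup Msub R h τ = sSup (bellSet Msub R h τ) := rfl

variable (Msub : Fin m → StarSubalgebra ℂ M) (R : Finset (Fin m)) {h : ℕ}

/-- The universal norm bound on the operator `X`. -/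
lemma my_normX_le (hcard : R.card = h) (f g : Fin m → M)
    (hf : ∀ i, ‖f i‖ ≤ 2) (hg : ∀ i, ‖g i‖ ≤ 1) :
    ‖ordProd R f * ordProd Rᶜ g‖ ≤ 2 ^ h := by
  calc ‖ordProd R f * ordProd Rᶜ g‖ ≤ ‖ordProd R f‖ * ‖ordProd Rᶜ g‖ := norm_mul_le _ _
    _ ≤ 2 ^ R.card * 1 ^ Rᶜ.card := by
        refine mul_le_mul (my_ordProd_norm_le _ _ _ (by norm_num) fun i _ => hf i)
          (my_ordProd_norm_le _ _ _ (by norm_num) fun i _ => hg i) (norm_nonneg _) (by positivity)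
    _ = 2 ^ h := by rw [hcard]; simp

lemma my_zero_mem (hh : 2 ≤ h) (hcard : R.card = h) (τ : M →L[ℂ] ℂ) :
    (0 : ℝ) ∈ bellSet Msub R h τ := by
  have hR : R.Nonempty := Finset.card_pos.mp (by omega)
  have h01 : (0 : M) ≤ 1 := by simpa using star_mul_self_nonneg (1 : M)
  refine ⟨fun _ => 0, fun _ => 0, fun i => zero_mem _, fun i => zero_mem _,
    fun i => IsSelfAdjoint.zero M, fun i => IsSelfAdjoint.zero M,
    fun i => ⟨neg_nonpos.mpr h01, h01⟩, fun i => ⟨neg_nonpos.mpr h01, h01⟩, ?_⟩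
  have hz : ordProd R (fun _ => (0 : M) + 0) = 0 := by
    simpa using my_ordProd_zero R hR
  have hz' : ordProd R (fun _ => (0 : M) - 0) = 0 := by
    simpa using my_ordProd_zero R hR
  have hp : (1 / (h : ℝ)) ≠ 0 := by
    have : (h : ℝ) ≠ 0 := Nat.cast_ne_zero.mpr (by omega)
    simp [this]
  have hp' : ((h : ℝ))⁻¹ ≠ 0 := inv_ne_zero (Nat.cast_ne_zero.mpr (by omega))
  rw [hz, hz']
  simp [one_div, Real.zero_rpow hp']

lemma my_bddAbove (hcard : R.card = h) (τ : M →L[ℂ] ℂ) :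
    BddAbove (bellSet Msub R h τ) := by
  refine ⟨2 * ((‖τ‖ * 2 ^ h) ^ (1 / (h : ℝ))), ?_⟩
  rintro s ⟨A0, A1, hm0, hm1, hsa0, hsa1, hb0, hb1, rfl⟩
  have hn0 : ∀ i, ‖A0 i‖ ≤ 1 := fun i => my_norm_le_one _ (hsa0 i) (hb0 i).1 (hb0 i).2
  have hn1 : ∀ i, ‖A1 i‖ ≤ 1 := fun i => my_norm_le_one _ (hsa1 i) (hb1 i).1 (hb1 i).2
  have key : ∀ X : M, ‖X‖ ≤ 2 ^ h →
      ‖τ X‖ ^ (1 / (h : ℝ)) ≤ (‖τ‖ * 2 ^ h) ^ (1 / (h : ℝ)) := by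
    intro X hX
    refine Real.rpow_le_rpow (norm_nonneg _) ?_ (by positivity)
    calc ‖τ X‖ = ‖τ X‖ := rfl
      _ ≤ ‖τ‖ * ‖X‖ := τ.le_opNorm X
      _ ≤ ‖τ‖ * 2 ^ h := by
          exact mul_le_mul_of_nonneg_left hX (norm_nonneg τ)
  have h1 := key _ (my_normX_le R hcard (fun i => A0 i + A1 i) A0
    (fun i => (norm_add_le _ _).trans (by linarith [hn0 i, hn1 i])) hn0)
  have h2 := key _ (my_normX_le R hcard (fun i => A0 i - A1 i) A1
    (fun i => (norm_sub_le _ _).trans (by linarith [hn0 i, hn1 i])) hn1)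
  linarith

lemma my_key (hh : 2 ≤ h) (hcard : R.card = h) (φ ψ : M →L[ℂ] ℂ) :
    bellSup Msub R h φ ≤ bellSup Msub R h ψ + 4 * ‖φ - ψ‖ ^ (1 / (h : ℝ)) := by
  set p : ℝ := 1 / (h : ℝ) with hp_def
  have hhR : (h : ℝ) ≠ 0 := Nat.cast_ne_zero.mpr (by omega)
  have hp0 : 0 ≤ p := by positivity
  have hp1 : p ≤ 1 := by
    rw [hp_def, div_le_one (by positivity)]
    exact_mod_cast by omega
  have hSψ0 : 0 ≤ bellSup Msub R h ψ :=
    le_csSup (my_bddAbove Msub R hcard ψ) (my_zero_mem Msub R hh hcard ψ)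
  have hrp : 0 ≤ 4 * ‖φ - ψ‖ ^ p := by positivity
  rw [bellSup_eq]
  refine Real.sSup_le ?_ (by linarith)
  rintro s ⟨A0, A1, hm0, hm1, hsa0, hsa1, hb0, hb1, rfl⟩
  have hn0 : ∀ i, ‖A0 i‖ ≤ 1 := fun i => my_norm_le_one _ (hsa0 i) (hb0 i).1 (hb0 i).2
  have hn1 : ∀ i, ‖A1 i‖ ≤ 1 := fun i => my_norm_le_one _ (hsa1 i) (hb1 i).1 (hb1 i).2
  -- per-term estimate
  have term : ∀ X : M, ‖X‖ ≤ 2 ^ h →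
      ‖φ X‖ ^ p ≤ ‖ψ X‖ ^ p + 2 * ‖φ - ψ‖ ^ p := by
    intro X hX
    have htri : ‖φ X‖ ≤ ‖ψ X‖ + ‖φ - ψ‖ * ‖X‖ := by
      have : φ X = ψ X + (φ - ψ) X := by simp
      calc ‖φ X‖ = ‖ψ X + (φ - ψ) X‖ := by rw [← this]
        _ ≤ ‖ψ X‖ + ‖(φ - ψ) X‖ := norm_add_le _ _
        _ ≤ ‖ψ X‖ + ‖φ - ψ‖ * ‖X‖ := by
            exact add_le_add_right ((φ - ψ).le_opNorm X) _
    calc ‖φ X‖ ^ p ≤ (‖ψ X‖ + ‖φ - ψ‖ * ‖X‖) ^ p :=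
          Real.rpow_le_rpow (norm_nonneg _) htri hp0
      _ ≤ ‖ψ X‖ ^ p + (‖φ - ψ‖ * ‖X‖) ^ p :=
          my_rpow_add_le _ _ (norm_nonneg _) (by positivity) hp0 hp1
      _ ≤ ‖ψ X‖ ^ p + 2 * ‖φ - ψ‖ ^ p := by
          gcongr
          calc (‖φ - ψ‖ * ‖X‖) ^ p ≤ (‖φ - ψ‖ * 2 ^ h) ^ p := by
                refine Real.rpow_le_rpow (by positivity) ?_ hp0
                exact mul_le_mul_of_nonneg_left hX (norm_nonneg _)
            _ = ‖φ - ψ‖ ^ p * ((2 : ℝ) ^ h) ^ p := Real.mul_rpow (norm_nonneg _) (by positivity)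
            _ = 2 * ‖φ - ψ‖ ^ p := by
                rw [hp_def, my_rpow_cancel 2 (by norm_num) h (by omega)]; ring
  have hX1 := my_normX_le R hcard (fun i => A0 i + A1 i) A0
    (fun i => (norm_add_le _ _).trans (by linarith [hn0 i, hn1 i])) hn0
  have hX2 := my_normX_le R hcard (fun i => A0 i - A1 i) A1
    (fun i => (norm_sub_le _ _).trans (by linarith [hn0 i, hn1 i])) hn1
  have t1 := term _ hX1
  have t2 := term _ hX2
  have hmem : ‖ψ (ordProd R (fun i => A0 i + A1 i) * ordProd Rᶜ A0)‖ ^ p +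
      ‖ψ (ordProd R (fun i => A0 i - A1 i) * ordProd Rᶜ A1)‖ ^ p
      ≤ bellSup Msub R h ψ :=
    le_csSup (my_bddAbove Msub R hcard ψ)
      ⟨A0, A1, hm0, hm1, hsa0, hsa1, hb0, hb1, rfl⟩
  linarith

end Main

theorem bellSup_norm_continuous
    {M : Type*} [NormedRing M] [StarRing M] [CStarRing M] [CompleteSpace M]
    [NormedAlgebra ℂ M] [StarModule ℂ M] [PartialOrder M] [StarOrderedRing M]
    {m : ℕ} (hm : 2 ≤ m)
    (Msub : Fin m → StarSubalgebra ℂ M)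
    (hcomm : ∀ i j : Fin m, i ≠ j → ∀ x ∈ Msub i, ∀ y ∈ Msub j, Commute x y)
    (R : Finset (Fin m)) (h : ℕ) (hh : 2 ≤ h) (hcard : R.card = h) :
    (∀ φ ψ : M →L[ℂ] ℂ,
      (∀ a : M, 0 ≤ φ (star a * a)) → φ 1 = 1 →
      (∀ a : M, 0 ≤ ψ (star a * a)) → ψ 1 = 1 →
      |bellSup Msub R h φ - bellSup Msub R h ψ| ≤ 4 * ‖φ - ψ‖ ^ (1 / (h : ℝ))) ∧
    Continuous (fun τ : {τ : M →L[ℂ] ℂ // (∀ a : M, 0 ≤ τ (star a * a)) ∧ τ 1 = 1} =>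
      bellSup Msub R h τ.1) := by
  have key : ∀ φ ψ : M →L[ℂ] ℂ,
      |bellSup Msub R h φ - bellSup Msub R h ψ| ≤ 4 * ‖φ - ψ‖ ^ (1 / (h : ℝ)) := by
    intro φ ψ
    rw [abs_sub_le_iff]
    constructor
    · linarith [my_key Msub R hh hcard φ ψ]
    · have := my_key Msub R hh hcard ψ φ
      rw [norm_sub_rev] at this
      linarith
  refine ⟨fun φ ψ _ _ _ _ => key φ ψ, ?_⟩
  rw [Metric.continuous_iff]
  intro τ ε hε
  refine ⟨(ε / 8) ^ h, by positivity, fun τ' hd => ?_⟩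
  have hdist : ‖τ'.1 - τ.1‖ < (ε / 8) ^ h := by
    rw [← dist_eq_norm]
    exact lt_of_le_of_lt (le_of_eq (Subtype.dist_eq τ' τ)) hd
  have hbound := key τ'.1 τ.1
  have hlt : ‖τ'.1 - τ.1‖ ^ (1 / (h : ℝ)) < ε / 8 := by
    calc ‖τ'.1 - τ.1‖ ^ (1 / (h : ℝ)) < ((ε / 8) ^ h) ^ (1 / (h : ℝ)) :=
          Real.rpow_lt_rpow (norm_nonneg _) hdist (by positivity)
      _ = ε / 8 := my_rpow_cancel _ (by positivity) h (by omega)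
  rw [Real.dist_eq]
  calc |bellSup Msub R h τ'.1 - bellSup Msub R h τ.1| ≤ 4 * ‖τ'.1 - τ.1‖ ^ (1 / (h : ℝ)) :=
        hbound
    _ < 4 * (ε / 8) := by
        have hnn : (0:ℝ) ≤ ‖τ'.1 - τ.1‖ ^ (1 / (h : ℝ)) := Real.rpow_nonneg (norm_nonneg _) _
        linarith
    _ < ε := by linarith
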